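/- arXiv:2502.12609 — 7 statements merged into one kernel-verified Lean document; each statement's English description precedes it below -/
import Mathlib

section
/- Let p be an odd positive integer and let v : ℝ² → ℝ be a polynomial of total degree at most p such that for every i ≠ j and every univariate polynomial q of degree at most p−1 one has ∫₀¹ v(γ_{ij}(t)) q(t) dt = 0. Then v vanishes at every point of each of the three closed edges of the triangle K, i.e., v(γ_{ij}(t)) = 0 for all i ≠ j and all t ∈ [0,1]. -/
open MeasureTheory Polynomial


/-- Aux: substituting degree-≤1 polynomials into an mv-polynomial gives degree ≤ totalDegree. -/
lemma natDegree_eval₂_le (v : MvPolynomial (Fin 2) ℝ) (g : Fin 2 → Polynomial ℝ)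
    (hg : ∀ k, (g k).natDegree ≤ 1) :
    (MvPolynomial.eval₂ Polynomial.C g v).natDegree ≤ v.totalDegree := by
  rw [MvPolynomial.eval₂_eq]
  refine (Polynomial.natDegree_sum_le_of_forall_le _ _ ?_)
  intro m hm
  refine le_trans (natDegree_mul_le) ?_
  simp only [natDegree_C, zero_add]
  refine le_trans (Polynomial.natDegree_prod_le _ _) ?_
  calc ∑ k ∈ m.support, ((g k) ^ (m k)).natDegree ≤ ∑ k ∈ m.support, m k := by
        refine Finset.sum_le_sum fun k _ => ?_
        exact le_trans (natDegree_pow_le) (by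
          calc m k * (g k).natDegree ≤ m k * 1 := Nat.mul_le_mul_left _ (hg k)
          _ = m k := Nat.mul_one _)
  _ ≤ v.totalDegree := by
        have := MvPolynomial.le_totalDegree hm
        simpa [Finsupp.sum] using this

/-- Aux: evaluating the univariate restriction. -/
lemma eval_eval₂_poly (v : MvPolynomial (Fin 2) ℝ) (g : Fin 2 → Polynomial ℝ) (t : ℝ) :
    Polynomial.eval t (MvPolynomial.eval₂ Polynomial.C g v)
      = MvPolynomial.eval (fun k => (g k).eval t) v := by
  rw [show Polynomial.eval t (MvPolynomial.eval₂ Polynomial.C g v)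
      = (Polynomial.evalRingHom t) (MvPolynomial.eval₂ Polynomial.C g v) from rfl,
    MvPolynomial.eval₂_comp_left]
  congr 1
  · ext x
    simp

/-- Aux: `p`-th coefficient of composition with `1 - X`. -/
lemma coeff_comp_one_sub (P : Polynomial ℝ) (p : ℕ) (h : P.natDegree ≤ p) :
    (P.comp (1 - Polynomial.X)).coeff p = (-1)^p * P.coeff p := by
  rw [Polynomial.comp, Polynomial.eval₂_eq_sum, Polynomial.sum_def]
  rw [Polynomial.finset_sum_coeff]
  have key : ∀ n ∈ P.support, (Polynomial.C (P.coeff n) * (1 - Polynomial.X)^n).coeff p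
      = if n = p then (-1)^p * P.coeff p else 0 := by
    intro n hn
    rw [Polynomial.coeff_C_mul]
    by_cases hnp : n = p
    · subst hnp
      rw [if_pos rfl]
      have h1 : (1 - Polynomial.X : Polynomial ℝ) = -(Polynomial.X - Polynomial.C 1) := by
        rw [Polynomial.C_1, neg_sub]
      have h2 : ((Polynomial.X - Polynomial.C (1:ℝ))^n).coeff n = 1 := by
        have hm : ((Polynomial.X - Polynomial.C (1:ℝ))^n).Monic := (monic_X_sub_C 1).pow n
        have hd : ((Polynomial.X - Polynomial.C (1:ℝ))^n).natDegree = n := by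
          rw [Polynomial.natDegree_pow, Polynomial.natDegree_X_sub_C, mul_one]
        have h3 := hm.coeff_natDegree
        rwa [hd] at h3
      rw [h1, neg_pow, show ((-1:Polynomial ℝ)^n) = Polynomial.C ((-1:ℝ)^n) by simp,
        Polynomial.coeff_C_mul, h2, mul_one]
      ring
    · rw [if_neg hnp]
      rcases lt_or_gt_of_ne hnp with hlt | hgt
      · have hdeg : ((1 - Polynomial.X : Polynomial ℝ)^n).natDegree ≤ n := by
          refine Polynomial.natDegree_pow_le.trans ?_
          have h1 : (1 - Polynomial.X : Polynomial ℝ).natDegree ≤ 1 :=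
            (Polynomial.natDegree_sub_le _ _).trans (by simp)
          calc n * (1 - Polynomial.X : Polynomial ℝ).natDegree ≤ n * 1 :=
              Nat.mul_le_mul_left n h1
          _ = n := Nat.mul_one n
        rw [Polynomial.coeff_eq_zero_of_natDegree_lt (lt_of_le_of_lt hdeg hlt), mul_zero]
      · have : P.coeff n = 0 := Polynomial.coeff_eq_zero_of_natDegree_lt (lt_of_le_of_lt h hgt)
        rw [this, zero_mul]
  rw [Finset.sum_congr rfl key]
  by_cases hp : p ∈ P.support
  · rw [Finset.sum_ite_eq' P.support p _]
    simp [hp]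
  · rw [Finset.sum_ite_eq' P.support p _]
    simp only [hp, if_false]
    have : P.coeff p = 0 := by rwa [← Polynomial.notMem_support_iff]
    simp [this]

/-- Aux: a polynomial nonneg on `Ioc 0 1` with zero integral on `[0,1]` is zero. -/
lemma poly_vanish (g : Polynomial ℝ) (hnn : ∀ t ∈ Set.Ioc (0:ℝ) 1, 0 ≤ g.eval t)
    (h0 : ∫ t in (0:ℝ)..1, g.eval t = 0) : g = 0 := by
  by_contra hg
  rw [intervalIntegral.integral_of_le zero_le_one] at h0
  have hint : IntegrableOn (fun t => g.eval t) (Set.Ioc (0:ℝ) 1) :=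
    (g.continuous_aeval).integrableOn_Ioc
  have hnn' : 0 ≤ᵐ[volume.restrict (Set.Ioc (0:ℝ) 1)] fun t => g.eval t := by
    filter_upwards [ae_restrict_mem measurableSet_Ioc] with t ht using hnn t ht
  have hae := (MeasureTheory.setIntegral_eq_zero_iff_of_nonneg_ae hnn' hint).mp h0
  have hfin : Set.Finite {t : ℝ | g.IsRoot t} := Polynomial.finite_setOf_isRoot hg
  have hmem : volume ({t : ℝ | ¬ g.eval t = 0} ∩ Set.Ioc (0:ℝ) 1) = 0 := by
    have h1 := hae
    rw [Filter.EventuallyEq, ae_iff] at h1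
    have hms : MeasurableSet {a : ℝ | ¬ eval a g = (0 : ℝ → ℝ) a} := by
      simp only [Pi.zero_apply, ← Set.compl_setOf]
      exact (isClosed_eq g.continuous_aeval continuous_const).measurableSet.compl
    rwa [Measure.restrict_apply hms] at h1
  have hsub : Set.Ioc (0:ℝ) 1 ⊆ ({t : ℝ | ¬ g.eval t = 0} ∩ Set.Ioc (0:ℝ) 1) ∪ {t : ℝ | g.IsRoot t} := by
    intro t ht
    by_cases h : g.eval t = 0
    · exact Or.inr h
    · exact Or.inl ⟨h, ht⟩
  have : volume (Set.Ioc (0:ℝ) 1) = 0 := by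
    refine le_antisymm ?_ zero_le
    calc volume (Set.Ioc (0:ℝ) 1) ≤ _ := measure_mono hsub
    _ ≤ volume ({t : ℝ | ¬ g.eval t = 0} ∩ Set.Ioc (0:ℝ) 1) + volume {t : ℝ | g.IsRoot t} :=
        measure_union_le _ _
    _ = 0 := by rw [hmem, hfin.measure_zero, add_zero]
  simp [Real.volume_Ioc] at this


/-- The edge parametrization `γ_{ij}(t) = A i + t • (A j - A i)`. -/
noncomputable def edgeParam (A : Fin 3 → (Fin 2 → ℝ)) (i j : Fin 3) (t : ℝ) :
    Fin 2 → ℝ :=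
  A i + t • (A j - A i)

/-- If `p` is odd and the edge moments of a bivariate polynomial of total degree at most `p`
against all univariate polynomials of degree at most `p − 1` vanish, then the polynomial
vanishes on every closed edge of the triangle. -/
theorem CR_odd_vanishes_on_edges (p : ℕ) (hp_pos : 0 < p) (hp_odd : Odd p)
    (A : Fin 3 → (Fin 2 → ℝ)) (hA : AffineIndependent ℝ A)
    (v : MvPolynomial (Fin 2) ℝ) (hv : v.totalDegree ≤ p)
    (hedge : ∀ i j : Fin 3, i ≠ j → ∀ q : Polynomial ℝ, q.natDegree ≤ p - 1 →
      ∫ t in (0:ℝ)..1,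
        MvPolynomial.eval (edgeParam A i j t) v * q.eval t = 0) :
    ∀ i j : Fin 3, i ≠ j → ∀ t ∈ Set.Icc (0:ℝ) 1,
      MvPolynomial.eval (edgeParam A i j t) v = 0 := by
  -- the substitution polynomials and the univariate edge restrictions
  set sub : Fin 3 → Fin 3 → Fin 2 → Polynomial ℝ :=
    fun i j k => Polynomial.C (A i k) + Polynomial.C (A j k - A i k) * Polynomial.X with hsub
  set f : Fin 3 → Fin 3 → Polynomial ℝ :=
    fun i j => MvPolynomial.eval₂ Polynomial.C (sub i j) v with hf
  have heval : ∀ i j (t : ℝ), (f i j).eval t = MvPolynomial.eval (edgeParam A i j t) v := by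
    intro i j t
    simp only [hf]
    rw [eval_eval₂_poly]
    have harg : (fun k => (sub i j k).eval t) = edgeParam A i j t := by
      funext k
      simp only [hsub, edgeParam, Polynomial.eval_add, Polynomial.eval_mul, Polynomial.eval_C,
        Polynomial.eval_X, Pi.add_apply, Pi.smul_apply, Pi.sub_apply, smul_eq_mul]
      ring
    rw [harg]
  have hdegf : ∀ i j, (f i j).natDegree ≤ p := by
    intro i j
    refine (natDegree_eval₂_le v _ ?_).trans hv
    intro k
    refine (Polynomial.natDegree_add_le _ _).trans (max_le (by simp) ?_)
    refine (Polynomial.natDegree_mul_le).trans (by simp)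
  have horth : ∀ i j, i ≠ j → ∀ q : Polynomial ℝ, q.natDegree ≤ p - 1 →
      ∫ t in (0:ℝ)..1, (f i j).eval t * q.eval t = 0 := by
    intro i j hij q hq
    simp_rw [heval]
    exact hedge i j hij q hq
  have hcomp : ∀ i j, f j i = (f i j).comp (1 - Polynomial.X) := by
    intro i j
    simp only [hf, Polynomial.comp]
    rw [show Polynomial.eval₂ Polynomial.C (1 - Polynomial.X)
          (MvPolynomial.eval₂ Polynomial.C (sub i j) v)
        = (Polynomial.eval₂RingHom Polynomial.C (1 - Polynomial.X))
          (MvPolynomial.eval₂ Polynomial.C (sub i j) v) from rfl]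
    rw [MvPolynomial.eval₂_comp_left]
    congr 1
    · ext x
      simp
    · funext k
      simp only [hsub, coe_eval₂RingHom, Function.comp, Polynomial.eval₂_add,
        Polynomial.eval₂_neg, Polynomial.eval₂_sub, Polynomial.eval₂_mul, Polynomial.eval₂_C, Polynomial.eval₂_X,
        Polynomial.C_sub]
      ring
  -- the symmetrized restriction vanishes
  have hRsum : ∀ i j, i ≠ j → f i j + f j i = 0 := by
    intro i j hij
    set R : Polynomial ℝ := f i j + f j i with hR
    have hcp : R.coeff p = 0 := by
      rw [hR, Polynomial.coeff_add, hcomp i j, coeff_comp_one_sub _ p (hdegf i j),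
        hp_odd.neg_one_pow]
      ring
    have hdR : R.natDegree ≤ p - 1 := by
      rcases eq_or_ne R 0 with h0 | h0
      · simp [h0]
      · have h1 : R.natDegree ≤ p :=
          (Polynomial.natDegree_add_le _ _).trans (max_le (hdegf i j) (hdegf j i))
        have h2 : R.natDegree ≠ p := by
          intro he
          exact h0 (Polynomial.leadingCoeff_eq_zero.mp
            (by rw [Polynomial.leadingCoeff, he]; exact hcp))
        omega
    have hi1 : IntervalIntegrable (fun t => (f i j).eval t * R.eval t) volume 0 1 :=
      ((f i j).continuous_aeval.mul R.continuous_aeval).intervalIntegrable _ _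
    have hi2 : IntervalIntegrable (fun t => (f j i).eval t * R.eval t) volume 0 1 :=
      ((f j i).continuous_aeval.mul R.continuous_aeval).intervalIntegrable _ _
    have hint : ∫ t in (0:ℝ)..1, Polynomial.eval t (R * R) = 0 := by
      calc ∫ t in (0:ℝ)..1, Polynomial.eval t (R * R)
          = ∫ t in (0:ℝ)..1, ((f i j).eval t * R.eval t + (f j i).eval t * R.eval t) := by
            refine intervalIntegral.integral_congr fun t _ => ?_
            simp only [hR, Polynomial.eval_mul, Polynomial.eval_add]
            ring
      _ = (∫ t in (0:ℝ)..1, (f i j).eval t * R.eval t)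
            + ∫ t in (0:ℝ)..1, (f j i).eval t * R.eval t :=
            intervalIntegral.integral_add hi1 hi2
      _ = 0 := by rw [horth i j hij R hdR, horth j i hij.symm R hdR, add_zero]
    have hRR : R * R = 0 :=
      poly_vanish (R * R)
        (fun t _ => by rw [Polynomial.eval_mul]; exact mul_self_nonneg _) hint
    rw [hR] at *
    exact mul_self_eq_zero.mp hRR
  -- vertex values vanish
  have hpair : ∀ i j, i ≠ j →
      MvPolynomial.eval (A i) v + MvPolynomial.eval (A j) v = 0 := by
    intro i j hij
    have e0 : edgeParam A i j 0 = A i := by funext k; simp [edgeParam]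
    have e1 : edgeParam A j i 0 = A j := by funext k; simp [edgeParam]
    have h0 : (f i j).eval 0 = MvPolynomial.eval (A i) v := by rw [heval, e0]
    have h1 : (f j i).eval 0 = MvPolynomial.eval (A j) v := by rw [heval, e1]
    have := congrArg (Polynomial.eval (0:ℝ)) (hRsum i j hij)
    rw [Polynomial.eval_add, Polynomial.eval_zero, h0, h1] at this
    exact this
  have hvert : ∀ i, MvPolynomial.eval (A i) v = 0 := by
    have h01 := hpair 0 1 (by decide)
    have h12 := hpair 1 2 (by decide)
    have h02 := hpair 0 2 (by decide)
    have e0 : MvPolynomial.eval (A 0) v = 0 := by linarith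
    have e1 : MvPolynomial.eval (A 1) v = 0 := by linarith
    have e2 : MvPolynomial.eval (A 2) v = 0 := by linarith
    intro i
    fin_cases i
    · exact e0
    · exact e1
    · exact e2
  -- each edge restriction vanishes identically
  have hF0 : ∀ i j, i ≠ j → f i j = 0 := by
    intro i j hij
    have he0 : (f i j).coeff 0 = 0 := by
      rw [Polynomial.coeff_zero_eq_eval_zero, heval]
      have : edgeParam A i j 0 = A i := by funext k; simp [edgeParam]
      rw [this, hvert]
    obtain ⟨h, hh⟩ := Polynomial.X_dvd_iff.mpr he0
    rcases eq_or_ne h 0 with h0 | h0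
    · rw [hh, h0, mul_zero]
    · exfalso
      have hdh : h.natDegree ≤ p - 1 := by
        have hd := hdegf i j
        rw [hh, Polynomial.natDegree_mul Polynomial.X_ne_zero h0,
          Polynomial.natDegree_X] at hd
        omega
      have hint := horth i j hij h hdh
      have hz : Polynomial.X * (h * h) = 0 := by
        refine poly_vanish _ (fun t ht => ?_) ?_
        · simp only [Polynomial.eval_mul, Polynomial.eval_X]
          exact mul_nonneg ht.1.le (mul_self_nonneg _)
        · rw [show (∫ t in (0:ℝ)..1, Polynomial.eval t (Polynomial.X * (h*h)))
              = ∫ t in (0:ℝ)..1, (f i j).eval t * h.eval t from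
            intervalIntegral.integral_congr fun t _ => by
              rw [hh]; simp only [Polynomial.eval_mul, Polynomial.eval_X]; ring]
          exact hint
      rcases mul_eq_zero.mp hz with h1 | h1
      · exact Polynomial.X_ne_zero h1
      · exact h0 (mul_self_eq_zero.mp h1)
  intro i j hij t ht
  rw [← heval i j t, hF0 i j hij, Polynomial.eval_zero]
end

section
/- Let p be an even positive integer and let v : ℝ² → ℝ be a polynomial of total degree at most p such that for every i ≠ j and every index k ∈ {0, 1, …, p−2} ∪ {p} one has ∫₀¹ v(γ_{ij}(t)) L_k(2t−1) dt = 0. Then v vanishes at every point of each of the three closed edges of the triangle K, i.e., v(γ_{ij}(t)) = 0 for all i ≠ j and all t ∈ [0,1]. -/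
open MeasureTheory Polynomial

/-- The Legendre polynomial of degree `k`, via Rodrigues' formula
`L_k(x) = (1/(2^k k!)) (d/dx)^k [(x² − 1)^k]`. -/
noncomputable def legendre (k : ℕ) : Polynomial ℝ :=
  ((2 ^ k * k.factorial : ℝ)⁻¹) •
    ((fun q : Polynomial ℝ => Polynomial.derivative q)^[k] ((Polynomial.X ^ 2 - 1) ^ k))

section Aux
open Set




noncomputable def J (f : Polynomial ℝ) : ℝ := ∫ t in (0:ℝ)..1, f.eval t

lemma J_intble (f : Polynomial ℝ) :
    IntervalIntegrable (fun t => f.eval t) volume (0:ℝ) 1 :=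
  (f.continuous_aeval).intervalIntegrable 0 1

lemma J_add (f g : Polynomial ℝ) : J (f + g) = J f + J g := by
  unfold J
  simp only [eval_add]
  exact intervalIntegral.integral_add (J_intble f) (J_intble g)

lemma J_smul (a : ℝ) (f : Polynomial ℝ) : J (a • f) = a * J f := by
  unfold J
  simp only [eval_smul, smul_eq_mul]
  exact intervalIntegral.integral_const_mul a _

lemma J_zero : J 0 = 0 := by simp [J]

lemma J_derivative (f : Polynomial ℝ) : J (derivative f) = f.eval 1 - f.eval 0 := by
  unfold J
  exact intervalIntegral.integral_deriv_eq_sub'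
    (fun t => f.eval t) (funext fun x => f.deriv)
    (fun x _ => f.differentiableAt) (Polynomial.continuous _).continuousOn

lemma J_parts_one (g r : Polynomial ℝ) (h0 : g.eval 0 = 0) (h1 : g.eval 1 = 0) :
    J (derivative g * r) = - J (g * derivative r) := by
  have h := J_derivative (g * r)
  rw [derivative_mul, J_add] at h
  simp [h0, h1] at h
  linarith

lemma J_parts (n : ℕ) (g : Polynomial ℝ)
    (hg : ∀ j < n, (derivative^[j] g).eval 0 = 0 ∧ (derivative^[j] g).eval 1 = 0) :
    ∀ r : Polynomial ℝ, J (derivative^[n] g * r) = (-1:ℝ)^n * J (g * derivative^[n] r) := by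
  induction n generalizing g with
  | zero => simp
  | succ n ih =>
    intro r
    have hg' : ∀ j < n, (derivative^[j] (derivative g)).eval 0 = 0 ∧
        (derivative^[j] (derivative g)).eval 1 = 0 := by
      intro j hj
      rw [← Function.iterate_succ_apply]
      exact hg (j+1) (by omega)
    rw [Function.iterate_succ_apply, ih (derivative g) hg' r]
    have h0 := (hg 0 (Nat.succ_pos n)).1
    have h1 := (hg 0 (Nat.succ_pos n)).2
    simp only [Function.iterate_zero_apply] at h0 h1
    rw [J_parts_one g (derivative^[n] r) h0 h1, Function.iterate_succ_apply']
    ring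




noncomputable def NP (k : ℕ) : Polynomial ℝ :=
  derivative^[k] ((X^2 - X)^k)

noncomputable def shL (k : ℕ) : Polynomial ℝ := ((k.factorial : ℝ))⁻¹ • NP k

lemma iterate_derivative_comp_affine (f : Polynomial ℝ) (k : ℕ) :
    derivative^[k] (f.comp (C 2 * X - C 1)) =
      (2:ℝ)^k • ((derivative^[k] f).comp (C 2 * X - C 1)) := by
  induction k generalizing f with
  | zero => simp
  | succ k ih =>
    rw [Function.iterate_succ_apply, derivative_comp]
    have h2 : derivative (C 2 * X - C 1 : Polynomial ℝ) = C 2 := by simp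
    rw [h2, ← smul_eq_C_mul, iterate_derivative_smul, ih (derivative f),
      Function.iterate_succ_apply, smul_smul]
    ring_nf

lemma legendre_comp_eq_shL (k : ℕ) : (legendre k).comp (C 2 * X - C 1) = shL k := by
  unfold legendre shL NP
  rw [smul_comp]
  have h1 : (((X:Polynomial ℝ)^2 - 1)^k).comp (C 2 * X - C 1)
      = ((4:ℝ)^k) • (X^2 - X)^k := by
    rw [pow_comp, sub_comp, pow_comp, X_comp, one_comp]
    have h0 : ((C 2 * X - C 1:Polynomial ℝ))^2 - 1 = (4:ℝ) • (X^2 - X) := by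
      apply Polynomial.funext
      intro x
      simp only [eval_smul, eval_sub, eval_pow, eval_mul, eval_one, eval_X, eval_C,
        smul_eq_mul]
      ring
    rw [h0, _root_.smul_pow]
  have h2 := iterate_derivative_comp_affine (((X:Polynomial ℝ)^2 - 1)^k) k
  rw [h1, iterate_derivative_smul] at h2
  have h4 : ((derivative^[k] (((X:Polynomial ℝ)^2 - 1)^k)).comp (C 2 * X - C 1))
      = (2:ℝ)^k • derivative^[k] ((X^2 - X)^k) := by
    have h5 : (2:ℝ)^k • ((derivative^[k] (((X:Polynomial ℝ)^2 - 1)^k)).comp (C 2 * X - C 1))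
        = (2:ℝ)^k • ((2:ℝ)^k • derivative^[k] ((X^2 - X)^k)) := by
      rw [← h2, smul_smul]
      congr 1
      rw [show (4:ℝ) = 2*2 by norm_num, mul_pow]
    have h6 := congrArg (fun z => ((2:ℝ)^k)⁻¹ • z) h5
    simp only [smul_smul, inv_mul_cancel₀ (show ((2:ℝ)^k) ≠ 0 by positivity), one_smul] at h6
    rw [h6]
    congr 1
    field_simp
  rw [h4, smul_smul]
  congr 1
  have hk : (k.factorial : ℝ) ≠ 0 := Nat.cast_ne_zero.mpr k.factorial_ne_zero
  field_simp



lemma XsqX (k : ℕ) : ((X:Polynomial ℝ)^2 - X)^k = X^k * (X - C 1)^k := by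
  rw [← mul_pow]
  congr 1
  have : (C 1 : Polynomial ℝ) = 1 := by norm_num
  rw [this]; ring

lemma monic_XsqX : ((X:Polynomial ℝ)^2 - X).Monic :=
  monic_X_pow_sub (by simpa using degree_X_le.trans_lt (by norm_num))

lemma natDegree_XsqX : ((X:Polynomial ℝ)^2 - X).natDegree = 2 := by
  compute_degree!

lemma NP_deriv_eval_boundary (k j : ℕ) (hj : j < k) :
    (derivative^[j] ((X^2 - X:Polynomial ℝ)^k)).eval 0 = 0 ∧
    (derivative^[j] ((X^2 - X:Polynomial ℝ)^k)).eval 1 = 0 := by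
  rw [XsqX, iterate_derivative_mul]
  constructor <;>
  · rw [eval_finset_sum]
    apply Finset.sum_eq_zero
    intro i hi
    simp only [Finset.mem_range] at hi
    rw [iterate_derivative_X_pow_eq_smul]
    rw [show ((X:Polynomial ℝ) - C 1)^k = (X - C 1)^k from rfl, iterate_derivative_X_sub_pow]
    simp only [smul_eq_C_mul, eval_smul, eval_mul, eval_C, eval_pow, eval_X, eval_sub, eval_one,
      smul_eq_mul, nsmul_eq_mul, eval_natCast]
    first
    | (have h1 : (0:ℝ)^(k - (j - i)) = 0 := by
        apply zero_pow
        omega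
       rw [h1]; ring)
    | (have h1 : ((1:ℝ) - 1)^(k - i) = 0 := by
        rw [sub_self]
        apply zero_pow
        omega
       rw [h1]; ring)

lemma NP_eval_one (k : ℕ) : (NP k).eval 1 = (k.factorial : ℝ) := by
  unfold NP
  rw [XsqX, iterate_derivative_mul, eval_finset_sum]
  rw [Finset.sum_eq_single k]
  · rw [Nat.choose_self, iterate_derivative_X_sub_pow_self, Nat.sub_self]
    simp
  · intro i hi hik
    simp only [Finset.mem_range] at hi
    rw [iterate_derivative_X_sub_pow]
    simp only [eval_smul, eval_mul, eval_pow, eval_X, eval_sub, eval_C, smul_eq_mul,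
      nsmul_eq_mul, eval_natCast, eval_one]
    have h1 : ((1:ℝ) - 1)^(k - i) = 0 := by
      rw [sub_self]; exact zero_pow (by omega)
    rw [h1]; ring
  · intro h
    simp at h

lemma NP_eval_zero (k : ℕ) : (NP k).eval 0 = (-1:ℝ)^k * (k.factorial : ℝ) := by
  unfold NP
  rw [XsqX, iterate_derivative_mul, eval_finset_sum]
  rw [Finset.sum_eq_single 0]
  · rw [Nat.choose_zero_right, Nat.sub_zero, Function.iterate_zero_apply]
    rw [iterate_derivative_X_pow_eq_smul, Nat.sub_self, Nat.descFactorial_self]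
    simp
    ring
  · intro i hi hik
    rw [iterate_derivative_X_pow_eq_smul]
    simp only [eval_smul, eval_mul, eval_pow, eval_X, eval_sub, eval_C, smul_eq_mul,
      nsmul_eq_mul, eval_natCast, eval_one]
    have h1 : (0:ℝ)^(k - (k - i)) = 0 := by
      apply zero_pow
      simp only [Finset.mem_range] at hi
      omega
    rw [h1]; ring
  · intro h
    simp at h

lemma NP_coeff (k : ℕ) : (NP k).coeff k = ((2*k).descFactorial k : ℝ) := by
  unfold NP
  rw [coeff_iterate_derivative]
  have hm : ((X:Polynomial ℝ)^2 - X).Monic :=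
    monic_X_pow_sub (degree_X_le.trans_lt (by norm_num))
  have hd : (((X:Polynomial ℝ)^2 - X)^k).natDegree = 2 * k := by
    rw [hm.natDegree_pow, natDegree_XsqX]
    ring
  have hc : (((X:Polynomial ℝ)^2 - X)^k).coeff (k + k) = 1 := by
    have := (hm.pow k).leadingCoeff
    rwa [leadingCoeff, hd, show 2*k = k+k by ring] at this
  rw [hc]
  simp [show k + k = 2*k by ring]

lemma NP_natDegree_le (k : ℕ) : (NP k).natDegree ≤ k := by
  unfold NP
  have h := natDegree_iterate_derivative ((X^2 - X:Polynomial ℝ)^k) k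
  have hm : ((X:Polynomial ℝ)^2 - X).Monic :=
    monic_X_pow_sub (degree_X_le.trans_lt (by norm_num))
  have hd : (((X:Polynomial ℝ)^2 - X)^k).natDegree = 2 * k := by
    rw [hm.natDegree_pow, natDegree_XsqX]
    ring
  omega




lemma J_sq_eq_zero {f : Polynomial ℝ} (h : J (f * f) = 0) : f = 0 := by
  by_contra hf
  have hnn : 0 ≤ᵐ[volume.restrict (Ioc (0:ℝ) 1)] fun t => (f*f).eval t :=
    Filter.Eventually.of_forall fun t => by
      simp only [eval_mul]; exact mul_self_nonneg _
  have hz := (intervalIntegral.integral_eq_zero_iff_of_le_of_nonneg_ae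
    (by norm_num : (0:ℝ) ≤ 1) hnn (J_intble (f*f))).mp h
  have hae : ∀ᵐ t ∂volume.restrict (Ioc (0:ℝ) 1), f.eval t = 0 := by
    filter_upwards [hz] with t ht
    simp only [eval_mul, Pi.zero_apply] at ht
    exact mul_self_eq_zero.mp ht
  have hmeas : MeasurableSet {t : ℝ | ¬ f.eval t = 0} :=
    (isOpen_ne.preimage f.continuous_aeval).measurableSet
  have h0 : volume ({t : ℝ | ¬ f.eval t = 0} ∩ Ioc (0:ℝ) 1) = 0 := by
    have := (MeasureTheory.ae_iff).mp hae
    rwa [Measure.restrict_apply hmeas] at this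
  have hroots : volume {x : ℝ | f.IsRoot x} = 0 :=
    (f.finite_setOf_isRoot hf).measure_zero _
  have hsub : Ioc (0:ℝ) 1 ⊆ ({t : ℝ | ¬ f.eval t = 0} ∩ Ioc (0:ℝ) 1) ∪ {x : ℝ | f.IsRoot x} := by
    intro t ht
    by_cases h' : f.eval t = 0
    · exact Or.inr h'
    · exact Or.inl ⟨h', ht⟩
  have : volume (Ioc (0:ℝ) 1) ≤ 0 := by
    calc volume (Ioc (0:ℝ) 1)
        ≤ volume (({t : ℝ | ¬ f.eval t = 0} ∩ Ioc (0:ℝ) 1) ∪ {x : ℝ | f.IsRoot x}) :=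
          measure_mono hsub
      _ ≤ volume ({t : ℝ | ¬ f.eval t = 0} ∩ Ioc (0:ℝ) 1) + volume {x : ℝ | f.IsRoot x} :=
          measure_union_le _ _
      _ = 0 := by rw [h0, hroots, add_zero]
  rw [Real.volume_Ioc] at this
  norm_num at this

lemma shL_eval_one (k : ℕ) : (shL k).eval 1 = 1 := by
  unfold shL
  rw [eval_smul, NP_eval_one, smul_eq_mul,
    inv_mul_cancel₀ (Nat.cast_ne_zero.mpr k.factorial_ne_zero)]

lemma shL_eval_zero (k : ℕ) : (shL k).eval 0 = (-1:ℝ)^k := by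
  unfold shL
  rw [eval_smul, NP_eval_zero, smul_eq_mul]
  have hk : (k.factorial : ℝ) ≠ 0 := Nat.cast_ne_zero.mpr k.factorial_ne_zero
  field_simp

lemma shL_natDegree_le (k : ℕ) : (shL k).natDegree ≤ k :=
  (natDegree_smul_le _ _).trans (NP_natDegree_le k)

lemma shL_coeff_ne_zero (k : ℕ) : (shL k).coeff k ≠ 0 := by
  unfold shL
  rw [coeff_smul, NP_coeff, smul_eq_mul]
  have h1 : (k.factorial : ℝ) ≠ 0 := Nat.cast_ne_zero.mpr k.factorial_ne_zero
  have h2 : (2*k).descFactorial k ≠ 0 := by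
    rw [Ne, Nat.descFactorial_eq_zero_iff_lt]
    omega
  have h3 : ((2*k).descFactorial k : ℝ) ≠ 0 := Nat.cast_ne_zero.mpr h2
  exact mul_ne_zero (inv_ne_zero h1) h3

lemma shL_zero : shL 0 = 1 := by
  unfold shL NP
  simp

lemma shL_ne_zero (k : ℕ) : shL k ≠ 0 := fun h => by
  have := shL_eval_one k
  rw [h] at this
  simp at this

lemma J_sub (f g : Polynomial ℝ) : J (f - g) = J f - J g := by
  have h := J_add g (f - g)
  simp only [add_sub_cancel] at h
  linarith

lemma reduce_step (n : ℕ) (f : Polynomial ℝ) (hf : f.natDegree ≤ n) :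
    ∃ (a : ℝ) (s : Polynomial ℝ), f = a • shL n + s ∧ s.natDegree ≤ n - 1 := by
  refine ⟨f.coeff n / (shL n).coeff n, f - (f.coeff n / (shL n).coeff n) • shL n,
    by abel, ?_⟩
  rw [natDegree_le_iff_coeff_eq_zero]
  intro N hN
  rcases (show N = n ∨ n < N by omega) with h | h
  · rw [h, coeff_sub, coeff_smul, smul_eq_mul,
      div_mul_cancel₀ _ (shL_coeff_ne_zero n), sub_self]
  · rw [coeff_sub, coeff_smul, natDegree_le_iff_coeff_eq_zero.mp hf N h,
      natDegree_le_iff_coeff_eq_zero.mp (shL_natDegree_le n) N h]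
    simp

lemma J_ortho (k : ℕ) (r : Polynomial ℝ) (hr : r.natDegree < k) : J (r * shL k) = 0 := by
  have h1 : r * shL k = (k.factorial : ℝ)⁻¹ • (NP k * r) := by
    unfold shL
    rw [mul_smul_comm, mul_comm]
  rw [h1, J_smul]
  unfold NP
  rw [J_parts k _ (fun j hj => NP_deriv_eval_boundary k j hj) r,
    iterate_derivative_eq_zero hr, mul_zero, J_zero, mul_zero, mul_zero]

lemma main_poly (p : ℕ) (hp : 2 ≤ p) (q : Polynomial ℝ) (hq : q.natDegree ≤ p)
    (hmom : ∀ k : ℕ, (k ≤ p - 2 ∨ k = p) → J (q * shL k) = 0) :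
    ∃ c : ℝ, q = c • shL (p - 1) := by
  have hlow : ∀ n : ℕ, n ≤ p - 2 → ∀ f : Polynomial ℝ, f.natDegree ≤ n → J (q * f) = 0 := by
    intro n
    induction n with
    | zero =>
      intro _ f hf
      have hC : f = f.coeff 0 • shL 0 := by
        rw [shL_zero, smul_eq_C_mul, mul_one]
        exact eq_C_of_natDegree_le_zero hf
      rw [hC, mul_smul_comm, J_smul, hmom 0 (Or.inl (by omega)), mul_zero]
    | succ n ih =>
      intro hn f hf
      obtain ⟨a, s, rfl, hs⟩ := reduce_step (n+1) f hf
      have hdist : q * (a • shL (n+1) + s) = a • (q * shL (n+1)) + q * s := by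
        rw [mul_add, mul_smul_comm]
      rw [hdist, J_add, J_smul, hmom (n+1) (Or.inl hn),
        ih (by omega) s (by omega), mul_zero, add_zero]
  set m := p - 1 with hm
  have hLm : shL m ≠ 0 := shL_ne_zero m
  have hden : J (shL m * shL m) ≠ 0 := fun h0 => hLm (J_sq_eq_zero h0)
  set c := J (q * shL m) / J (shL m * shL m) with hc
  refine ⟨c, ?_⟩
  set r := q - c • shL m with hrdef
  have hsub : ∀ f : Polynomial ℝ, J (r * f) = J (q * f) - c * J (shL m * f) := by
    intro f
    rw [hrdef, sub_mul, J_sub, smul_mul_assoc, J_smul]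
  have h1 : J (r * shL m) = 0 := by
    rw [hsub, hc, div_mul_cancel₀ _ hden, sub_self]
  have hr_deg : r.natDegree ≤ p := by
    refine (natDegree_sub_le _ _).trans (max_le hq ?_)
    exact (natDegree_smul_le _ _).trans ((shL_natDegree_le m).trans (by omega))
  obtain ⟨a, s1, hr1, hs1⟩ := reduce_step p r hr_deg
  obtain ⟨b, s2, hs12, hs2⟩ := reduce_step (p-1) s1 (by omega)
  have hrr : r * r = a • (r * shL p) + (b • (r * shL (p-1)) + r * s2) := by
    calc r * r = r * (a • shL p + (b • shL (p-1) + s2)) := by rw [← hs12, ← hr1]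
    _ = a • (r * shL p) + (b • (r * shL (p-1)) + r * s2) := by
        rw [mul_add, mul_add, mul_smul_comm, mul_smul_comm]
  have hp1 : J (r * shL p) = 0 := by
    rw [hsub, hmom p (Or.inr rfl), J_ortho p (shL m) ((shL_natDegree_le m).trans_lt (by omega)),
      mul_zero, sub_zero]
  have hp3 : J (r * s2) = 0 := by
    rw [hsub, hlow (p-2) le_rfl s2 (by omega)]
    have : J (shL m * s2) = 0 := by
      rw [mul_comm]
      exact J_ortho m s2 (by omega)
    rw [this, mul_zero, sub_zero]
  have hzero : J (r * r) = 0 := by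
    rw [hrr, J_add, J_add, J_smul, J_smul, hp1, h1, hp3]
    ring
  have hr0 : r = 0 := J_sq_eq_zero hzero
  exact sub_eq_zero.mp hr0


lemma eval_aeval (f : Fin 2 → Polynomial ℝ) (v : MvPolynomial (Fin 2) ℝ) (t : ℝ) :
    (MvPolynomial.aeval f v).eval t = MvPolynomial.eval (fun m => (f m).eval t) v := by
  induction v using MvPolynomial.induction_on with
  | C a => simp
  | add f g hf hg => simp [hf, hg]
  | mul_X f n hf => simp [hf]

lemma shL_eval_eq_legendre (k : ℕ) (t : ℝ) :
    (Polynomial.eval (2*t - 1)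
      (((2 ^ k * k.factorial : ℝ)⁻¹) •
        ((fun q : Polynomial ℝ => Polynomial.derivative q)^[k] ((Polynomial.X ^ 2 - 1) ^ k))))
      = (shL k).eval t := by
  rw [← legendre_comp_eq_shL, eval_comp]
  congr 1
  simp

theorem CR_even_vanishes_on_edges' (p : ℕ) (hp_pos : 0 < p) (hp_even : Even p)
    (A : Fin 3 → (Fin 2 → ℝ))
    (v : MvPolynomial (Fin 2) ℝ) (hv : v.totalDegree ≤ p)
    (hedge : ∀ i j : Fin 3, i ≠ j → ∀ k : ℕ, (k ≤ p - 2 ∨ k = p) →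
      ∫ t in (0:ℝ)..1,
        MvPolynomial.eval (edgeParam A i j t) v * (legendre k).eval (2 * t - 1) = 0) :
    ∀ i j : Fin 3, i ≠ j → ∀ t ∈ Set.Icc (0:ℝ) 1,
      MvPolynomial.eval (edgeParam A i j t) v = 0 := by
  have hp2 : 2 ≤ p := by
    rcases hp_even with ⟨r, hr⟩
    omega
  have hodd : Odd (p - 1) := Nat.Even.sub_odd (by omega) hp_even odd_one
  have hL1 : (shL (p-1)).eval 1 = 1 := shL_eval_one _
  have hL0 : (shL (p-1)).eval 0 = -1 := by
    rw [shL_eval_zero]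
    exact hodd.neg_one_pow
  -- the edge restriction and its representation
  have key : ∀ i j : Fin 3, i ≠ j → ∃ c : ℝ, ∀ t : ℝ,
      MvPolynomial.eval (edgeParam A i j t) v = c * (shL (p-1)).eval t := by
    intro i j hij
    set f : Fin 2 → Polynomial ℝ :=
      fun m => Polynomial.C (A i m) + Polynomial.C (A j m - A i m) * Polynomial.X with hf
    set qp : Polynomial ℝ := MvPolynomial.aeval f v with hqp
    have heval : ∀ t : ℝ, qp.eval t = MvPolynomial.eval (edgeParam A i j t) v := by
      intro t
      rw [hqp, eval_aeval]
      have harg : (fun m => Polynomial.eval t (f m)) = edgeParam A i j t := by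
        funext m
        simp only [hf, eval_add, eval_mul, eval_C, eval_X, edgeParam, Pi.add_apply,
          Pi.smul_apply, Pi.sub_apply, smul_eq_mul]
        ring
      rw [harg]
    have hdeg : qp.natDegree ≤ p := by
      have := MvPolynomial.aeval_natDegree_le (n := 1) v hv f (fun m => by
        apply (natDegree_add_le _ _).trans
        apply max_le
        · simp
        · exact (natDegree_C_mul_le _ _).trans natDegree_X_le)
      simpa using this
    have hmom : ∀ k : ℕ, (k ≤ p - 2 ∨ k = p) → J (qp * shL k) = 0 := by
      intro k hk
      have h0 := hedge i j hij k hk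
      have hfun : Set.EqOn (fun t => (qp * shL k).eval t)
          (fun t => MvPolynomial.eval (edgeParam A i j t) v * (legendre k).eval (2*t-1))
          (Set.uIcc (0:ℝ) 1) := by
        intro t _
        simp only [eval_mul]
        rw [heval t]
        congr 1
        rw [← shL_eval_eq_legendre k t]
        rfl
      exact (intervalIntegral.integral_congr hfun).trans h0
    obtain ⟨c, hcq⟩ := main_poly p hp2 qp hdeg hmom
    refine ⟨c, fun t => ?_⟩
    rw [← heval t, hcq]
    simp
  have hedge0 : ∀ i j : Fin 3, edgeParam A i j 0 = A i := by
    intro i j; funext m; simp [edgeParam]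
  have hedge1 : ∀ i j : Fin 3, edgeParam A i j 1 = A j := by
    intro i j; funext m; simp [edgeParam]
  have hanti : ∀ i j : Fin 3, i ≠ j →
      MvPolynomial.eval (A i) v = - MvPolynomial.eval (A j) v := by
    intro i j hij
    obtain ⟨c, hc⟩ := key i j hij
    have h0 := hc 0
    have h1 := hc 1
    rw [hedge0, hL0] at h0
    rw [hedge1, hL1] at h1
    rw [h0, h1]
    ring
  have hV : ∀ i : Fin 3, MvPolynomial.eval (A i) v = 0 := by
    have h01 := hanti 0 1 (by decide)
    have h12 := hanti 1 2 (by decide)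
    have h02 := hanti 0 2 (by decide)
    intro i
    fin_cases i <;> simp at h01 h12 h02 ⊢ <;> linarith
  intro i j hij t _
  obtain ⟨c, hc⟩ := key i j hij
  have h1 := hc 1
  rw [hedge1, hL1, hV j, mul_one] at h1
  rw [hc t, ← h1]
  ring

end Aux

/-- If `p` is even and the edge moments of a bivariate polynomial of total degree at most `p`
against the Legendre polynomials `L_k`, `k ∈ {0,…,p−2} ∪ {p}`, vanish, then the polynomial
vanishes on every closed edge of the triangle. -/
theorem CR_even_vanishes_on_edges (p : ℕ) (hp_pos : 0 < p) (hp_even : Even p)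
    (A : Fin 3 → (Fin 2 → ℝ)) (hA : AffineIndependent ℝ A)
    (v : MvPolynomial (Fin 2) ℝ) (hv : v.totalDegree ≤ p)
    (hedge : ∀ i j : Fin 3, i ≠ j → ∀ k : ℕ, (k ≤ p - 2 ∨ k = p) →
      ∫ t in (0:ℝ)..1,
        MvPolynomial.eval (edgeParam A i j t) v * (legendre k).eval (2 * t - 1) = 0) :
    ∀ i j : Fin 3, i ≠ j → ∀ t ∈ Set.Icc (0:ℝ) 1,
      MvPolynomial.eval (edgeParam A i j t) v = 0 := by
  exact CR_even_vanishes_on_edges' p hp_pos hp_even A v hv hedge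
end

section
/- Sign-alternation argument for odd degree (display (1.15) of the paper): let p be an odd positive integer, let f : ℝ² → ℝ be a function, and suppose there exist real constants c₁₂, c₂₃, c₃₁ such that f(γ₁₂(t)) = c₁₂ L_p(2t−1), f(γ₂₃(t)) = c₂₃ L_p(2t−1), and f(γ₃₁(t)) = c₃₁ L_p(2t−1) for all t ∈ [0,1]. Then c₁₂ = c₂₃ = c₃₁ = 0; in particular f vanishes at every point of the three closed edges of K. -/
open MeasureTheory Polynomial

open Finset in
lemma legendre_factored (k : ℕ) :
    ((X:ℝ[X]) ^ 2 - 1) ^ k = (X - C 1) ^ k * (X - C (-1)) ^ k := by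
  rw [← mul_pow]; ring_nf; simp [map_neg]; ring

open Finset in
lemma legendre_eval_one (k : ℕ) : (legendre k).eval 1 = 1 := by
  unfold legendre
  rw [legendre_factored]
  show (((2:ℝ) ^ k * k.factorial)⁻¹ •
    (derivative^[k] ((X - C 1) ^ k * (X - C (-1)) ^ k))).eval 1 = 1
  rw [iterate_derivative_mul, eval_smul, eval_finset_sum,
    sum_eq_single_of_mem 0 (mem_range.mpr k.succ_pos)]
  · simp only [Nat.choose_zero_right, one_smul, Nat.sub_zero, Function.iterate_zero, id_eq,
      iterate_derivative_X_sub_pow_self, eval_mul, eval_natCast, eval_pow, eval_sub,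
      eval_X, eval_C]
    have : (1 - (-1) : ℝ) = 2 := by norm_num
    rw [this]
    have h2 : ((2:ℝ) ^ k * k.factorial) ≠ 0 := by positivity
    field_simp
    rw [smul_eq_mul, one_div, inv_mul_cancel₀ h2]
  · intro b hb hb0
    rw [iterate_derivative_X_sub_pow, Nat.sub_sub_self (Nat.lt_succ_iff.mp (mem_range.mp hb))]
    simp [zero_pow hb0]

open Finset in
lemma legendre_eval_neg_one (k : ℕ) : (legendre k).eval (-1) = (-1) ^ k := by
  unfold legendre
  rw [legendre_factored]
  show (((2:ℝ) ^ k * k.factorial)⁻¹ •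
    (derivative^[k] ((X - C 1) ^ k * (X - C (-1)) ^ k))).eval (-1) = (-1)^k
  rw [iterate_derivative_mul, eval_smul, eval_finset_sum,
    sum_eq_single_of_mem k (mem_range.mpr k.lt_succ_self)]
  · simp only [Nat.choose_self, one_smul, Nat.sub_self, Function.iterate_zero, id_eq,
      iterate_derivative_X_sub_pow_self, eval_mul, eval_natCast, eval_pow, eval_sub,
      eval_X, eval_C]
    rw [show (-1 - 1 : ℝ) = (-1) * 2 by ring, mul_pow]
    have h2 : ((2:ℝ) ^ k * k.factorial) ≠ 0 := by positivity
    field_simp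
    rw [smul_eq_mul, one_div, ← mul_assoc, inv_mul_cancel₀ h2, one_mul]
  · intro b hb hbk
    have hb' : b < k := lt_of_le_of_ne (Nat.lt_succ_iff.mp (mem_range.mp hb)) hbk
    rw [iterate_derivative_X_sub_pow k b (-1 : ℝ)]
    simp [zero_pow (Nat.sub_ne_zero_of_lt hb')]

/-- Sign-alternation argument for odd degree: if along each (cyclically oriented) closed
edge of the triangle a function coincides with a multiple of `L_p(2t−1)`, `p` odd, then all
three multiples vanish, and hence the function vanishes on the three closed edges. -/
theorem sign_alternation_odd (p : ℕ) (hp_pos : 0 < p) (hp_odd : Odd p)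
    (A₁ A₂ A₃ : Fin 2 → ℝ) (hA : AffineIndependent ℝ ![A₁, A₂, A₃])
    (f : (Fin 2 → ℝ) → ℝ) (c₁₂ c₂₃ c₃₁ : ℝ)
    (h₁₂ : ∀ t ∈ Set.Icc (0:ℝ) 1,
      f (A₁ + t • (A₂ - A₁)) = c₁₂ * (legendre p).eval (2 * t - 1))
    (h₂₃ : ∀ t ∈ Set.Icc (0:ℝ) 1,
      f (A₂ + t • (A₃ - A₂)) = c₂₃ * (legendre p).eval (2 * t - 1))
    (h₃₁ : ∀ t ∈ Set.Icc (0:ℝ) 1,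
      f (A₃ + t • (A₁ - A₃)) = c₃₁ * (legendre p).eval (2 * t - 1)) :
    c₁₂ = 0 ∧ c₂₃ = 0 ∧ c₃₁ = 0 ∧
      ∀ t ∈ Set.Icc (0:ℝ) 1,
        f (A₁ + t • (A₂ - A₁)) = 0 ∧
        f (A₂ + t • (A₃ - A₂)) = 0 ∧
        f (A₃ + t • (A₁ - A₃)) = 0 := by
  have hL1 : (legendre p).eval 1 = 1 := legendre_eval_one p
  have hLm1 : (legendre p).eval (-1) = -1 := by
    rw [legendre_eval_neg_one, hp_odd.neg_one_pow]
  have hone : (2 * (1:ℝ) - 1) = 1 := by norm_num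
  have hzero : (2 * (0:ℝ) - 1) = -1 := by norm_num
  have hend₁ : A₁ + (1:ℝ) • (A₂ - A₁) = A₂ := by simp
  have hend₂ : A₂ + (1:ℝ) • (A₃ - A₂) = A₃ := by simp
  have hend₃ : A₃ + (1:ℝ) • (A₁ - A₃) = A₁ := by simp
  have hst₁ : A₁ + (0:ℝ) • (A₂ - A₁) = A₁ := by simp
  have hst₂ : A₂ + (0:ℝ) • (A₃ - A₂) = A₂ := by simp
  have hst₃ : A₃ + (0:ℝ) • (A₁ - A₃) = A₃ := by simp
  have q1 : f A₂ = c₁₂ := by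
    have h := h₁₂ 1 (by norm_num)
    rw [hend₁, hone, hL1, mul_one] at h; exact h
  have q2 : f A₂ = -c₂₃ := by
    have h := h₂₃ 0 (by norm_num)
    rw [hst₂, hzero, hLm1] at h; linarith
  have q3 : f A₃ = c₂₃ := by
    have h := h₂₃ 1 (by norm_num)
    rw [hend₂, hone, hL1, mul_one] at h; exact h
  have q4 : f A₃ = -c₃₁ := by
    have h := h₃₁ 0 (by norm_num)
    rw [hst₃, hzero, hLm1] at h; linarith
  have q5 : f A₁ = c₃₁ := by
    have h := h₃₁ 1 (by norm_num)
    rw [hend₃, hone, hL1, mul_one] at h; exact h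
  have q6 : f A₁ = -c₁₂ := by
    have h := h₁₂ 0 (by norm_num)
    rw [hst₁, hzero, hLm1] at h; linarith
  have hc₁₂ : c₁₂ = 0 := by linarith
  have hc₂₃ : c₂₃ = 0 := by linarith
  have hc₃₁ : c₃₁ = 0 := by linarith
  refine ⟨hc₁₂, hc₂₃, hc₃₁, fun t ht => ?_⟩
  refine ⟨?_, ?_, ?_⟩
  · rw [h₁₂ t ht, hc₁₂, zero_mul]
  · rw [h₂₃ t ht, hc₂₃, zero_mul]
  · rw [h₃₁ t ht, hc₃₁, zero_mul]
end

section
/- Sign-alternation argument for even degree (display (2.4) of the paper): let p be an even positive integer, let f : ℝ² → ℝ be a function, and suppose there exist real constants c₁₂, c₂₃, c₃₁ such that f(γ₁₂(t)) = c₁₂ L_{p−1}(2t−1), f(γ₂₃(t)) = c₂₃ L_{p−1}(2t−1), and f(γ₃₁(t)) = c₃₁ L_{p−1}(2t−1) for all t ∈ [0,1]. Then c₁₂ = c₂₃ = c₃₁ = 0; in particular f vanishes at every point of the three closed edges of K. -/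
open MeasureTheory Polynomial

lemma sq_sub_one_eq (k : ℕ) :
    ((Polynomial.X ^ 2 - 1 : Polynomial ℝ)) ^ k = ((X - C 1) ^ k) * ((X - C (-1)) ^ k) := by
  rw [← mul_pow]; congr 1; simp only [map_one, map_neg]; ring

/-- Sign-alternation argument for odd degree: if along each (cyclically oriented) closed
edge of the triangle a function coincides with a multiple of `L_{p−1}(2t−1)`, `p` even, then all
three multiples vanish, and hence the function vanishes on the three closed edges. -/
theorem sign_alternation_even (p : ℕ) (hp_pos : 0 < p) (hp_even : Even p)
    (A₁ A₂ A₃ : Fin 2 → ℝ) (hA : AffineIndependent ℝ ![A₁, A₂, A₃])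
    (f : (Fin 2 → ℝ) → ℝ) (c₁₂ c₂₃ c₃₁ : ℝ)
    (h₁₂ : ∀ t ∈ Set.Icc (0:ℝ) 1,
      f (A₁ + t • (A₂ - A₁)) = c₁₂ * (legendre (p - 1)).eval (2 * t - 1))
    (h₂₃ : ∀ t ∈ Set.Icc (0:ℝ) 1,
      f (A₂ + t • (A₃ - A₂)) = c₂₃ * (legendre (p - 1)).eval (2 * t - 1))
    (h₃₁ : ∀ t ∈ Set.Icc (0:ℝ) 1,
      f (A₃ + t • (A₁ - A₃)) = c₃₁ * (legendre (p - 1)).eval (2 * t - 1)) :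
    c₁₂ = 0 ∧ c₂₃ = 0 ∧ c₃₁ = 0 ∧
      ∀ t ∈ Set.Icc (0:ℝ) 1,
        f (A₁ + t • (A₂ - A₁)) = 0 ∧
        f (A₂ + t • (A₃ - A₂)) = 0 ∧
        f (A₃ + t • (A₁ - A₃)) = 0 := by
  have hodd : Odd (p - 1) := by
    rcases hp_even with ⟨m, hm⟩
    refine ⟨m - 1, by omega⟩
  have e1 : (legendre (p-1)).eval 1 = 1 := legendre_eval_one _
  have em1 : (legendre (p-1)).eval (-1) = -1 := by
    rw [legendre_eval_neg_one, hodd.neg_one_pow]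
  have mem0 : (0:ℝ) ∈ Set.Icc (0:ℝ) 1 := by norm_num
  have mem1 : (1:ℝ) ∈ Set.Icc (0:ℝ) 1 := by norm_num
  have v2a := h₁₂ 1 mem1
  have v2b := h₂₃ 0 mem0
  have v3a := h₂₃ 1 mem1
  have v3b := h₃₁ 0 mem0
  have v1a := h₃₁ 1 mem1
  have v1b := h₁₂ 0 mem0
  simp only [one_smul, zero_smul, add_zero, show (2:ℝ)*1-1 = 1 by ring,
    show (2:ℝ)*0-1 = -1 by ring, e1, em1] at v2a v2b v3a v3b v1a v1b
  have hA2 : A₁ + (A₂ - A₁) = A₂ := by abel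
  have hA3 : A₂ + (A₃ - A₂) = A₃ := by abel
  have hA1 : A₃ + (A₁ - A₃) = A₁ := by abel
  rw [hA2] at v2a; rw [hA3] at v3a; rw [hA1] at v1a
  have eq1 : c₁₂ = -c₂₃ := by rw [← mul_one c₁₂, ← v2a, v2b]; ring
  have eq2 : c₂₃ = -c₃₁ := by rw [← mul_one c₂₃, ← v3a, v3b]; ring
  have eq3 : c₃₁ = -c₁₂ := by rw [← mul_one c₃₁, ← v1a, v1b]; ring
  have h12 : c₁₂ = 0 := by linarith
  have h23 : c₂₃ = 0 := by linarith
  have h31 : c₃₁ = 0 := by linarith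
  refine ⟨h12, h23, h31, fun t ht => ⟨?_, ?_, ?_⟩⟩
  · rw [h₁₂ t ht, h12, zero_mul]
  · rw [h₂₃ t ht, h23, zero_mul]
  · rw [h₃₁ t ht, h31, zero_mul]
end

section
/- Divisibility by the product of barycentric coordinates: let p ≥ 3 be an integer and let v : ℝ² → ℝ be a polynomial of total degree at most p that vanishes at every point of each of the three closed edges of the triangle K (i.e., v(γ_{ij}(t)) = 0 for all i ≠ j and t ∈ [0,1]). Then there exists a polynomial q : ℝ² → ℝ of total degree at most p−3 such that v = λ₁ λ₂ λ₃ q. -/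
section AuxBary
open MvPolynomial

noncomputable def affP (a b c : ℝ) : MvPolynomial (Fin 2) ℝ :=
  C a + C b * X 0 + C c * X 1

lemma eval_affP (a b c : ℝ) (x : Fin 2 → ℝ) :
    eval x (affP a b c) = a + b * x 0 + c * x 1 := by
  simp [affP]

lemma totalDegree_affP_le (a b c : ℝ) : (affP a b c).totalDegree ≤ 1 := by
  have h1 : (C b * X 0 : MvPolynomial (Fin 2) ℝ).totalDegree ≤ 1 := by
    refine (totalDegree_mul _ _).trans ?_
    simp [totalDegree_C, totalDegree_X]
  have h2 : (C c * X 1 : MvPolynomial (Fin 2) ℝ).totalDegree ≤ 1 := by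
    refine (totalDegree_mul _ _).trans ?_
    simp [totalDegree_C, totalDegree_X]
  refine (totalDegree_add _ _).trans (max_le ((totalDegree_add _ _).trans (max_le ?_ h1)) h2)
  simp [totalDegree_C]

lemma eval_bind₁' (f : Fin 2 → ℝ) (g : Fin 2 → MvPolynomial (Fin 2) ℝ)
    (φ : MvPolynomial (Fin 2) ℝ) :
    eval f (bind₁ g φ) = eval (fun i => eval f (g i)) φ := by
  simpa using aeval_bind₁ (S := ℝ) f g φ

lemma totalDegree_bind₁_le (g : Fin 2 → MvPolynomial (Fin 2) ℝ)
    (hg : ∀ i, (g i).totalDegree ≤ 1) (φ : MvPolynomial (Fin 2) ℝ) :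
    (bind₁ g φ).totalDegree ≤ φ.totalDegree := by
  conv_lhs => rw [φ.as_sum, map_sum]
  refine (totalDegree_finset_sum _ _).trans (Finset.sup_le fun d hd => ?_)
  rw [bind₁_monomial]
  refine (totalDegree_mul _ _).trans ?_
  rw [totalDegree_C, zero_add]
  refine (totalDegree_finset_prod _ _).trans ?_
  calc ∑ i ∈ d.support, ((g i) ^ d i).totalDegree
      ≤ ∑ i ∈ d.support, d i := by
        refine Finset.sum_le_sum fun i _ => ?_
        calc ((g i) ^ d i).totalDegree ≤ d i * (g i).totalDegree := totalDegree_pow _ _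
        _ ≤ d i * 1 := Nat.mul_le_mul_left _ (hg i)
        _ = d i := mul_one _
    _ ≤ φ.totalDegree := by
        have := le_totalDegree hd
        rwa [Finsupp.sum] at this

lemma X0_dvd_of_vanish (w : MvPolynomial (Fin 2) ℝ)
    (h : ∀ y : Fin 2 → ℝ, y 0 = 0 → eval y w = 0) : X (0 : Fin 2) ∣ w := by
  set F := finSuccEquiv ℝ 1 w with hF
  have hc : F.coeff 0 = 0 := by
    apply MvPolynomial.funext
    intro s
    have h2 : eval (Fin.cons (0:ℝ) s : Fin 2 → ℝ) w = 0 := h _ (by simp)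
    rw [eval_eq_eval_mv_eval', ← Polynomial.coeff_zero_eq_eval_zero,
      Polynomial.coeff_map] at h2
    simpa using h2
  obtain ⟨G, hG⟩ := Polynomial.X_dvd_iff.mpr hc
  refine ⟨(finSuccEquiv ℝ 1).symm G, ?_⟩
  have h3 := congrArg (finSuccEquiv ℝ 1).symm hG
  rw [AlgEquiv.symm_apply_apply] at h3
  rw [h3, map_mul]
  congr 1
  rw [← finSuccEquiv_X_zero (R := ℝ) (n := 1), AlgEquiv.symm_apply_apply]

lemma totalDegree_le_of_X0_mul (r w : MvPolynomial (Fin 2) ℝ) (hr : r ≠ 0)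
    (hw : w = X 0 * r) : r.totalDegree + 1 ≤ w.totalDegree := by
  obtain ⟨d, hd, hdeg⟩ : ∃ d ∈ r.support, (d.sum fun _ n => n) = r.totalDegree := by
    have hne : r.support.Nonempty :=
      Finset.nonempty_iff_ne_empty.mpr (fun hc => hr (support_eq_empty.mp hc))
    obtain ⟨d, hd, hsup⟩ := Finset.exists_mem_eq_sup r.support hne
      (fun d => d.sum fun _ n => n)
    exact ⟨d, hd, by rw [totalDegree, hsup]⟩
  have hcoeff : coeff (Finsupp.single 0 1 + d) w ≠ 0 := by
    rw [hw, coeff_X_mul]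
    exact mem_support_iff.mp hd
  have h4 := le_totalDegree (mem_support_iff.mpr hcoeff)
  rw [Finsupp.sum_add_index (by simp) (by simp)] at h4
  simp only [Finsupp.sum_single_index, hdeg] at h4
  omega

lemma vanish_line_of_infinite (r : MvPolynomial (Fin 2) ℝ) (B d : Fin 2 → ℝ)
    (S : Set ℝ) (hS : S.Infinite)
    (h : ∀ s ∈ S, eval (B + s • d) r = 0) :
    ∀ s : ℝ, eval (B + s • d) r = 0 := by
  set g : Fin 2 → Polynomial ℝ := fun i => Polynomial.C (B i) + Polynomial.C (d i) * Polynomial.X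
  set u : Polynomial ℝ := aeval g r with hu
  have key : ∀ s : ℝ, Polynomial.eval s u = eval (B + s • d) r := by
    intro s
    have hcomp : (Polynomial.aeval s : Polynomial ℝ →ₐ[ℝ] ℝ).comp (MvPolynomial.aeval g)
        = MvPolynomial.aeval (fun i => Polynomial.aeval s (g i)) := by
      apply MvPolynomial.algHom_ext
      intro i
      simp
    have := DFunLike.congr_fun hcomp r
    simp only [AlgHom.coe_comp, Function.comp_apply] at this
    rw [hu, ← Polynomial.coe_aeval_eq_eval, this]
    have h3 : (fun i => Polynomial.aeval s (g i)) = B + s • d := by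
      funext i
      simp only [g, map_add, map_mul, Polynomial.aeval_C, Polynomial.aeval_X,
        Pi.add_apply, Pi.smul_apply, smul_eq_mul, Algebra.algebraMap_self, RingHom.id_apply]
      ring
    rw [h3, ← MvPolynomial.coe_aeval_eq_eval]
    rfl
  have hu0 : u = 0 := by
    apply Polynomial.eq_zero_of_infinite_isRoot
    apply hS.mono
    intro s hs
    simp only [Set.mem_setOf_eq, Polynomial.IsRoot, key]
    exact h s hs
  intro s
  rw [← key, hu0, Polynomial.eval_zero]

lemma divide_by_affine (ℓ : (Fin 2 → ℝ) →ᵃ[ℝ] ℝ) (B e d : Fin 2 → ℝ)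
    (hB : ℓ B = 0) (he : ℓ.linear e = 1) (hd : ℓ.linear d = 0)
    (hind : ∀ α β : ℝ, α • e + β • d = 0 → α = 0 ∧ β = 0)
    (v : MvPolynomial (Fin 2) ℝ)
    (hline : ∀ s : ℝ, eval (B + s • d) v = 0) :
    ∃ q : MvPolynomial (Fin 2) ℝ, q.totalDegree ≤ v.totalDegree - 1 ∧
      ∀ x : Fin 2 → ℝ, eval x v = ℓ x * eval x q := by
  set det := e 0 * d 1 - e 1 * d 0 with hdetdef
  have hdet : det ≠ 0 := by
    intro h0
    have h1 := hind (d 1) (-(e 1)) (by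
      funext i; fin_cases i <;> simp [Pi.add_apply, Pi.smul_apply, smul_eq_mul] <;> nlinarith)
    have h2 := hind (d 0) (-(e 0)) (by
      funext i; fin_cases i <;> simp [Pi.add_apply, Pi.smul_apply, smul_eq_mul] <;> nlinarith)
    have h3 := hind 1 0 (by
      funext i; fin_cases i <;>
        simp [Pi.add_apply, Pi.smul_apply, smul_eq_mul] <;> nlinarith)
    exact one_ne_zero h3.1
  set g : Fin 2 → MvPolynomial (Fin 2) ℝ := fun k => affP (B k) (e k) (d k) with hgdef
  have hg : ∀ (y : Fin 2 → ℝ) (k : Fin 2), eval y (g k) = (B + y 0 • e + y 1 • d) k := by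
    intro y k
    simp [hgdef, eval_affP, Pi.add_apply, Pi.smul_apply, smul_eq_mul]
    ring
  set τ : (Fin 2 → ℝ) → (Fin 2 → ℝ) := fun x =>
    ![(d 1 * (x 0 - B 0) - d 0 * (x 1 - B 1)) / det,
      (e 0 * (x 1 - B 1) - e 1 * (x 0 - B 0)) / det] with hτdef
  set h' : Fin 2 → MvPolynomial (Fin 2) ℝ :=
    ![affP ((d 0 * B 1 - d 1 * B 0) / det) (d 1 / det) (-(d 0) / det),
      affP ((e 1 * B 0 - e 0 * B 1) / det) (-(e 1) / det) (e 0 / det)] with hhdef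
  have hh : ∀ (x : Fin 2 → ℝ) (k : Fin 2), eval x (h' k) = τ x k := by
    intro x k
    fin_cases k <;> simp [hhdef, hτdef, eval_affP] <;> ring
  have hστ : ∀ x : Fin 2 → ℝ, B + (τ x 0) • e + (τ x 1) • d = x := by
    intro x
    funext i
    fin_cases i <;>
      simp [hτdef, Pi.add_apply, Pi.smul_apply, smul_eq_mul] <;>
      field_simp <;> ring
  have hℓσ : ∀ y : Fin 2 → ℝ, ℓ (B + y 0 • e + y 1 • d) = y 0 := by
    intro y
    have hrw : B + y 0 • e + y 1 • d = (y 0 • e + y 1 • d) +ᵥ B := by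
      simp only [vadd_eq_add]
      abel
    rw [hrw, ℓ.map_vadd, vadd_eq_add, map_add, map_smul, map_smul, he, hd, hB]
    simp
  set w : MvPolynomial (Fin 2) ℝ := bind₁ g v with hwdef
  have hw : ∀ y : Fin 2 → ℝ, eval y w = eval (B + y 0 • e + y 1 • d) v := by
    intro y
    rw [hwdef, eval_bind₁']
    have hfg : (fun i => eval y (g i)) = B + y 0 • e + y 1 • d := funext (hg y)
    rw [hfg]
  obtain ⟨r, hr⟩ : X (0 : Fin 2) ∣ w := by
    apply X0_dvd_of_vanish
    intro y hy0
    rw [hw y, hy0]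
    have : B + (0:ℝ) • e + y 1 • d = B + y 1 • d := by
      simp
    rw [this]
    exact hline (y 1)
  refine ⟨bind₁ h' r, ?_, ?_⟩
  · by_cases hr0 : r = 0
    · simp [hr0]
    · have h4 := totalDegree_le_of_X0_mul r w hr0 hr
      have h5 : w.totalDegree ≤ v.totalDegree :=
        totalDegree_bind₁_le g (fun k => totalDegree_affP_le _ _ _) v
      have h6 : (bind₁ h' r).totalDegree ≤ r.totalDegree :=
        totalDegree_bind₁_le h' (fun k => by
          fin_cases k <;> exact totalDegree_affP_le _ _ _) r
      omega
  · intro x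
    have e1 : eval x (bind₁ h' r) = eval (τ x) r := by
      rw [eval_bind₁']
      have hfh : (fun i => eval x (h' i)) = τ x := funext (hh x)
      rw [hfh]
    have e3 : ℓ x = τ x 0 := by
      conv_lhs => rw [← hστ x]
      exact hℓσ (τ x)
    calc eval x v = eval (τ x) w := by rw [hw (τ x), hστ x]
      _ = τ x 0 * eval (τ x) r := by rw [hr]; simp
      _ = ℓ x * eval x (bind₁ h' r) := by rw [e3, e1]

lemma lin_diff (ℓ : (Fin 2 → ℝ) →ᵃ[ℝ] ℝ) (P Q : Fin 2 → ℝ) :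
    ℓ.linear (P - Q) = ℓ P - ℓ Q := by
  have h := ℓ.map_vadd Q (P - Q)
  rw [vadd_eq_add, vadd_eq_add, sub_add_cancel] at h
  linarith


end AuxBary

open MeasureTheory Polynomial

/-- A bivariate polynomial of total degree at most `p ≥ 3` vanishing on the three closed
edges of a triangle is the product of the three barycentric coordinates with a polynomial
of total degree at most `p − 3`. -/
theorem divisible_by_barycentric_product (p : ℕ) (hp : 3 ≤ p)
    (A : Fin 3 → (Fin 2 → ℝ)) (hA : AffineIndependent ℝ A)
    (lam : Fin 3 → ((Fin 2 → ℝ) →ᵃ[ℝ] ℝ))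
    (hlam : ∀ i j : Fin 3, lam i (A j) = if i = j then 1 else 0)
    (v : MvPolynomial (Fin 2) ℝ) (hv : v.totalDegree ≤ p)
    (hedge : ∀ i j : Fin 3, i ≠ j → ∀ t ∈ Set.Icc (0:ℝ) 1,
      MvPolynomial.eval (edgeParam A i j t) v = 0) :
    ∃ q : MvPolynomial (Fin 2) ℝ, q.totalDegree ≤ p - 3 ∧
      ∀ x : Fin 2 → ℝ,
        MvPolynomial.eval x v =
          lam 0 x * lam 1 x * lam 2 x * MvPolynomial.eval x q := by
  have lind : ∀ k i j : Fin 3,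
      (lam k).linear (A j - A i) = (if k = j then 1 else 0) - (if k = i then 1 else 0) := by
    intro k i j
    rw [lin_diff, hlam, hlam]
  have hval : ∀ (k i j : Fin 3) (s : ℝ),
      lam k (A i + s • (A j - A i)) =
        (if k = i then 1 else 0) + s * ((if k = j then 1 else 0) - (if k = i then 1 else 0)) := by
    intro k i j s
    have hrw : A i + s • (A j - A i) = (s • (A j - A i)) +ᵥ A i := by
      rw [vadd_eq_add, add_comm]
    rw [hrw, (lam k).map_vadd, vadd_eq_add, _root_.map_smul, lind, hlam]
    simp [smul_eq_mul]
    ring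
  have hline : ∀ i j : Fin 3, i ≠ j → ∀ s : ℝ,
      MvPolynomial.eval (A i + s • (A j - A i)) v = 0 := by
    intro i j hij
    exact vanish_line_of_infinite v (A i) (A j - A i) (Set.Icc 0 1)
      (Set.Icc_infinite (by norm_num)) (fun s hs => hedge i j hij s hs)
  -- Step 1: divide by lam 0 along line through A 1, A 2
  obtain ⟨q₁, hq₁d, hq₁⟩ := divide_by_affine (lam 0) (A 1) (A 0 - A 1) (A 2 - A 1)
    (by simpa using hlam 0 1)
    (by rw [lind]; norm_num [Fin.ext_iff])
    (by rw [lind]; norm_num [Fin.ext_iff])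
    (by
      intro α β hab
      constructor
      · have h := congrArg (lam 0).linear hab
        rw [map_add, _root_.map_smul, _root_.map_smul, lind 0 1 0, lind 0 1 2, map_zero] at h
        simpa using h
      · have h := congrArg (lam 2).linear hab
        rw [map_add, _root_.map_smul, _root_.map_smul, lind 2 1 0, lind 2 1 2, map_zero] at h
        simpa using h)
    v (hline 1 2 (by decide))
  -- Step 2: q₁ vanishes on line through A 0, A 2; divide by lam 1
  have hlineq₁ : ∀ s : ℝ, MvPolynomial.eval (A 0 + s • (A 2 - A 0)) q₁ = 0 := by
    apply vanish_line_of_infinite q₁ (A 0) (A 2 - A 0) {s : ℝ | s ≠ 1}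
      (((Set.finite_singleton (1:ℝ)).infinite_compl).mono (by
        intro s hs
        simpa using hs))
    intro s hs
    have h1 := hq₁ (A 0 + s • (A 2 - A 0))
    rw [hline 0 2 (by decide) s, hval 0 0 2 s] at h1
    simp only [Set.mem_setOf_eq] at hs
    have h2 := h1.symm
    rcases mul_eq_zero.mp h2 with h3 | h3
    · norm_num [Fin.ext_iff] at h3
      exact absurd (by linarith : s = 1) hs
    · exact h3
  obtain ⟨q₂, hq₂d, hq₂⟩ := divide_by_affine (lam 1) (A 0) (A 1 - A 0) (A 2 - A 0)
    (by simpa using hlam 1 0)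
    (by rw [lind]; norm_num [Fin.ext_iff])
    (by rw [lind]; norm_num [Fin.ext_iff])
    (by
      intro α β hab
      constructor
      · have h := congrArg (lam 1).linear hab
        rw [map_add, _root_.map_smul, _root_.map_smul, lind 1 0 1, lind 1 0 2, map_zero] at h
        simpa using h
      · have h := congrArg (lam 2).linear hab
        rw [map_add, _root_.map_smul, _root_.map_smul, lind 2 0 1, lind 2 0 2, map_zero] at h
        simpa using h)
    q₁ hlineq₁
  -- Step 3: q₂ vanishes on line through A 0, A 1; divide by lam 2
  have hlineq₂ : ∀ s : ℝ, MvPolynomial.eval (A 0 + s • (A 1 - A 0)) q₂ = 0 := by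
    apply vanish_line_of_infinite q₂ (A 0) (A 1 - A 0) {s : ℝ | s ≠ 0 ∧ s ≠ 1}
      ((((Set.finite_singleton (1:ℝ)).insert 0).infinite_compl).mono (by
        intro s hs
        simp only [Set.mem_compl_iff, Set.mem_insert_iff, Set.mem_singleton_iff] at hs
        constructor <;> intro hc <;> exact hs (by simp [hc])))
    intro s hs
    obtain ⟨hs0, hs1⟩ := hs
    have h1 := hq₁ (A 0 + s • (A 1 - A 0))
    have h2 := hq₂ (A 0 + s • (A 1 - A 0))
    rw [hline 0 1 (by decide) s, hval 0 0 1 s, h2, hval 1 0 1 s] at h1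
    have h3 := h1.symm
    rcases mul_eq_zero.mp h3 with h4 | h4
    · norm_num [Fin.ext_iff] at h4
      exact absurd (by linarith : s = 1) hs1
    rcases mul_eq_zero.mp h4 with h5 | h5
    · norm_num [Fin.ext_iff] at h5
      exact absurd h5 hs0
    · exact h5
  obtain ⟨q, hqd, hq⟩ := divide_by_affine (lam 2) (A 0) (A 2 - A 0) (A 1 - A 0)
    (by simpa using hlam 2 0)
    (by rw [lind]; norm_num [Fin.ext_iff])
    (by rw [lind]; norm_num [Fin.ext_iff])
    (by
      intro α β hab
      constructor
      · have h := congrArg (lam 2).linear hab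
        rw [map_add, _root_.map_smul, _root_.map_smul, lind 2 0 2, lind 2 0 1, map_zero] at h
        simpa using h
      · have h := congrArg (lam 1).linear hab
        rw [map_add, _root_.map_smul, _root_.map_smul, lind 1 0 2, lind 1 0 1, map_zero] at h
        simpa using h)
    q₂ hlineq₂
  refine ⟨q, ?_, ?_⟩
  · omega
  · intro x
    rw [hq₁ x, hq₂ x, hq x]
    ring
end

section
/- Failure of the odd-type moment degrees of freedom for p = 2: let A₁, A₂, A₃ be affinely independent points of ℝ² with barycentric coordinates λ₁, λ₂, λ₃, and define the quadratic polynomial q := 2 − 3(λ₁² + λ₂² + λ₃²). Then for every i ≠ j and every affine function ℓ : ℝ → ℝ one has ∫₀¹ q(γ_{ij}(t)) ℓ(t) dt = 0, yet q evaluated at the barycenter (A₁+A₂+A₃)/3 equals 1; in particular q is a nonzero polynomial of degree at most 2 all of whose degrees of freedom (1.13) for p = 2 vanish. -/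
open MeasureTheory Polynomial

lemma affine_on_edge (A : Fin 3 → (Fin 2 → ℝ)) (f : (Fin 2 → ℝ) →ᵃ[ℝ] ℝ)
    (i j : Fin 3) (t : ℝ) :
    f (edgeParam A i j t) = f (A i) + t * (f (A j) - f (A i)) := by
  have := f.apply_lineMap (A i) (A j) t
  simp only [AffineMap.lineMap_apply, vsub_eq_sub, vadd_eq_add, smul_eq_mul] at this
  have harg : edgeParam A i j t = t • (A j - A i) + A i := by
    simp [edgeParam]; abel
  rw [harg, this]; ring

lemma poly_int (c d : ℝ) :
    ∫ t in (0:ℝ)..1, (-d + (6*d - c)*t + (6*c-6*d)*t^2 + (-6*c)*t^3) = 0 := by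
  rw [intervalIntegral.integral_add (by apply Continuous.intervalIntegrable; continuity)
        (by apply Continuous.intervalIntegrable; continuity),
      intervalIntegral.integral_add (by apply Continuous.intervalIntegrable; continuity)
        (by apply Continuous.intervalIntegrable; continuity),
      intervalIntegral.integral_add (by apply Continuous.intervalIntegrable; continuity)
        (by apply Continuous.intervalIntegrable; continuity),
      intervalIntegral.integral_const_mul, intervalIntegral.integral_const_mul,
      intervalIntegral.integral_const_mul, integral_pow, integral_pow]
  simp [integral_id]
  ring

/-- Failure of the odd-type moment degrees of freedom for `p = 2`: the quadratic
`q = 2 − 3(λ₁² + λ₂² + λ₃²)` has vanishing edge moments against all affine functions,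
yet equals `1` at the barycenter. -/
theorem odd_dofs_fail_for_p_two
    (A : Fin 3 → (Fin 2 → ℝ)) (hA : AffineIndependent ℝ A)
    (lam : Fin 3 → ((Fin 2 → ℝ) →ᵃ[ℝ] ℝ))
    (hlam : ∀ i j : Fin 3, lam i (A j) = if i = j then 1 else 0)
    (q : (Fin 2 → ℝ) → ℝ)
    (hq : ∀ x : Fin 2 → ℝ, q x = 2 - 3 * ((lam 0 x) ^ 2 + (lam 1 x) ^ 2 + (lam 2 x) ^ 2)) :
    (∀ i j : Fin 3, i ≠ j → ∀ ℓ : ℝ →ᵃ[ℝ] ℝ,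
      ∫ t in (0:ℝ)..1, q (edgeParam A i j t) * ℓ t = 0) ∧
    q ((1 / 3 : ℝ) • (A 0 + A 1 + A 2)) = 1 := by
  constructor
  · intro i j hij ℓ
    have hℓ : ∀ t : ℝ, ℓ t = ℓ 0 + t * (ℓ 1 - ℓ 0) := by
      intro t
      have := ℓ.apply_lineMap 0 1 t
      simp [AffineMap.lineMap_apply] at this
      linarith [this]
    set c := ℓ 1 - ℓ 0 with hc
    set d := ℓ 0 with hd
    have key : ∀ t : ℝ, q (edgeParam A i j t) * ℓ t
        = -d + (6*d - c)*t + (6*c-6*d)*t^2 + (-6*c)*t^3 := by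
      intro t
      rw [hq, hℓ, affine_on_edge A (lam 0), affine_on_edge A (lam 1),
        affine_on_edge A (lam 2)]
      fin_cases i <;> fin_cases j <;>
        first
          | exact absurd rfl hij
          | (simp only [Fin.isValue, hlam, Fin.ext_iff, Fin.val_zero, Fin.val_one];
             norm_num; ring)
    rw [intervalIntegral.integral_congr (g := fun t =>
        -d + (6*d - c)*t + (6*c-6*d)*t^2 + (-6*c)*t^3) (fun t _ => key t)]
    exact poly_int c d
  · have hdec : ∀ (f : (Fin 2 → ℝ) →ᵃ[ℝ] ℝ) (x : Fin 2 → ℝ),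
        f x = f.linear x + f 0 := by
      intro f x
      have := f.map_vadd 0 x
      simpa [vadd_eq_add] using this
    have hbar : ∀ k : Fin 3, lam k ((1 / 3 : ℝ) • (A 0 + A 1 + A 2)) = 1/3 := by
      intro k
      have e0 := hdec (lam k) (A 0)
      have e1 := hdec (lam k) (A 1)
      have e2 := hdec (lam k) (A 2)
      have eb := hdec (lam k) ((1 / 3 : ℝ) • (A 0 + A 1 + A 2))
      have hl : (lam k).linear ((1 / 3 : ℝ) • (A 0 + A 1 + A 2))
          = (1/3) * ((lam k).linear (A 0) + (lam k).linear (A 1) + (lam k).linear (A 2)) := by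
        rw [LinearMap.map_smul, map_add, map_add]; simp [smul_eq_mul]
      have vsum : lam k (A 0) + lam k (A 1) + lam k (A 2) = 1 := by
        rw [hlam, hlam, hlam]; fin_cases k <;> simp [Fin.ext_iff] <;> norm_num
      rw [hl] at eb
      rw [e0, e1, e2] at vsum
      rw [eb]; linarith
    rw [hq, hbar 0, hbar 1, hbar 2]
    norm_num
end

section
/- Elemental bubbles of neighbouring triangles have the same restriction on the shared edge (display (1.22) of the paper): let p be an even positive integer, let B, C ∈ ℝ², and let A₁, A₂ ∈ ℝ² be such that both triples (A₁, B, C) and (A₂, B, C) are affinely independent. For m ∈ {1,2}, let λ₁^{(m)}, λ₂^{(m)}, λ₃^{(m)} be the barycentric coordinates of the triangle with vertices A_m, B, C, and define b_m(x) := (1/2)(−1 + L_p(1−2λ₁^{(m)}(x)) + L_p(1−2λ₂^{(m)}(x)) + L_p(1−2λ₃^{(m)}(x))). Then b₁(B + t(C−B)) = b₂(B + t(C−B)) for every t ∈ [0,1]. -/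
open MeasureTheory Polynomial

lemma affine_on_segment (f : (Fin 2 → ℝ) →ᵃ[ℝ] ℝ) (B C : Fin 2 → ℝ) (t : ℝ) :
    f (B + t • (C - B)) = f B + t * (f C - f B) := by
  have h : B + t • (C - B) = t • (C - B) +ᵥ B := by
    simp [vadd_eq_add, add_comm]
  rw [h, f.map_vadd, f.linear.map_smul]
  have h2 : f.linear (C - B) = f C - f B := f.linearMap_vsub C B
  simp [h2, vadd_eq_add, smul_eq_mul, add_comm]

/-- Elemental nonconforming bubbles of two neighbouring triangles sharing the edge from `B`
to `C` have the same restriction on that shared edge. -/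
theorem elemental_bubbles_agree_on_shared_edge (p : ℕ) (hp_pos : 0 < p) (hp_even : Even p)
    (B C A₁ A₂ : Fin 2 → ℝ)
    (h₁ : AffineIndependent ℝ ![A₁, B, C]) (h₂ : AffineIndependent ℝ ![A₂, B, C])
    (lam₁ lam₂ : Fin 3 → ((Fin 2 → ℝ) →ᵃ[ℝ] ℝ))
    (hlam₁ : ∀ i j : Fin 3, lam₁ i (![A₁, B, C] j) = if i = j then 1 else 0)
    (hlam₂ : ∀ i j : Fin 3, lam₂ i (![A₂, B, C] j) = if i = j then 1 else 0)
    (b₁ b₂ : (Fin 2 → ℝ) → ℝ)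
    (hb₁ : ∀ x : Fin 2 → ℝ, b₁ x = (1 / 2 : ℝ) *
      (-1 + (legendre p).eval (1 - 2 * lam₁ 0 x) + (legendre p).eval (1 - 2 * lam₁ 1 x) +
        (legendre p).eval (1 - 2 * lam₁ 2 x)))
    (hb₂ : ∀ x : Fin 2 → ℝ, b₂ x = (1 / 2 : ℝ) *
      (-1 + (legendre p).eval (1 - 2 * lam₂ 0 x) + (legendre p).eval (1 - 2 * lam₂ 1 x) +
        (legendre p).eval (1 - 2 * lam₂ 2 x))) :
    ∀ t ∈ Set.Icc (0:ℝ) 1, b₁ (B + t • (C - B)) = b₂ (B + t • (C - B)) := by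
  intro t _
  have e1B := hlam₁ 0 1; have e1C := hlam₁ 0 2
  have e2B := hlam₁ 1 1; have e2C := hlam₁ 1 2
  have e3B := hlam₁ 2 1; have e3C := hlam₁ 2 2
  have f1B := hlam₂ 0 1; have f1C := hlam₂ 0 2
  have f2B := hlam₂ 1 1; have f2C := hlam₂ 1 2
  have f3B := hlam₂ 2 1; have f3C := hlam₂ 2 2
  simp only [Matrix.cons_val_zero, Matrix.cons_val_one, Matrix.head_cons, Matrix.cons_val_two, Matrix.tail_cons,
    show ((0:Fin 3) = 1) = False by simp, show ((0:Fin 3) = 2) = False by simp,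
    show ((1:Fin 3) = 1) = True by simp, show ((1:Fin 3) = 2) = False by simp,
    show ((2:Fin 3) = 1) = False by simp, show ((2:Fin 3) = 2) = True by simp,
    if_true, if_false] at e1B e1C e2B e2C e3B e3C f1B f1C f2B f2C f3B f3C
  rw [hb₁, hb₂, affine_on_segment, affine_on_segment, affine_on_segment,
    affine_on_segment, affine_on_segment, affine_on_segment,
    e1B, e1C, e2B, e2C, e3B, e3C, f1B, f1C, f2B, f2C, f3B, f3C]
end
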